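/- arXiv:1504.03408 — 3 statements merged into one kernel-verified Lean document; each statement's English description precedes it below -/
import Mathlib

section
/- For every n ≥ 1 and every symmetric polynomial f in n variables over ℂ (i.e., f ∈ ℂ[x_1,…,x_n] invariant under all permutations of the variables), the element f(J_1,…,J_n) obtained by substituting the Jucys–Murphy elements for the variables (well defined since the J_b pairwise commute) lies in the center of the group algebra ℂ[S_n]. -/
open Equiv Finset MonoidAlgebra Finsupp

/-- The group algebra `ℂ[S_n]`. -/
abbrev GA (n : ℕ) := MonoidAlgebra ℂ (Equiv.Perm (Fin n))

/-- Group elements inside the group algebra. -/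
noncomputable abbrev og {n : ℕ} : Equiv.Perm (Fin n) →* GA n :=
  MonoidAlgebra.of ℂ (Equiv.Perm (Fin n))

/-- The Jucys–Murphy element `J_b = Σ_{a < b} (a b)` in the group algebra `ℂ[S_n]`. -/
noncomputable def JM (n : ℕ) (b : Fin n) : MonoidAlgebra ℂ (Equiv.Perm (Fin n)) :=
  ∑ a ∈ Finset.univ.filter (· < b), MonoidAlgebra.of ℂ (Equiv.Perm (Fin n)) (Equiv.swap a b)

lemma JM_mul_JM_of_lt {n : ℕ} {b c : Fin n} (hbc : b < c) :
    JM n b * JM n c = JM n c * JM n b := by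
  have key : ∑ p ∈ (univ.filter (· < b)) ×ˢ (univ.filter (· < c)),
      og (Equiv.swap p.1 b) * og (Equiv.swap p.2 c)
      = ∑ p ∈ (univ.filter (· < b)) ×ˢ (univ.filter (· < c)),
      og (Equiv.swap p.2 c) * og (Equiv.swap p.1 b) := by
    have hmem : ∀ p ∈ (univ.filter (· < b)) ×ˢ (univ.filter (· < c)),
        (p.1, Equiv.swap p.1 b p.2) ∈ (univ.filter (· < b)) ×ˢ (univ.filter (· < c)) := by
      rintro ⟨a, a'⟩ hp
      simp only [Finset.mem_product, Finset.mem_filter, Finset.mem_univ, true_and] at hp ⊢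
      obtain ⟨ha, ha'⟩ := hp
      refine ⟨ha, ?_⟩
      rcases eq_or_ne a' a with rfl | h1
      · rw [Equiv.swap_apply_left]; exact hbc
      · rcases eq_or_ne a' b with rfl | h2
        · rw [Equiv.swap_apply_right]; exact ha.trans hbc
        · rw [Equiv.swap_apply_of_ne_of_ne h1 h2]; exact ha'
    refine Finset.sum_nbij' (fun p => (p.1, Equiv.swap p.1 b p.2))
      (fun p => (p.1, Equiv.swap p.1 b p.2)) hmem hmem
      (fun p _ => by simp [Equiv.swap_apply_self]) (fun p _ => by simp [Equiv.swap_apply_self]) ?_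
    rintro ⟨a, a'⟩ hp
    simp only [Finset.mem_product, Finset.mem_filter, Finset.mem_univ, true_and] at hp
    obtain ⟨ha, ha'⟩ := hp
    rw [← map_mul, ← map_mul]
    congr 1
    have hcb : c ≠ b := hbc.ne'
    have hca : c ≠ a := (ha.trans hbc).ne'
    have h := Equiv.mul_swap_eq_swap_mul (Equiv.swap a b) a' c
    rwa [Equiv.swap_apply_of_ne_of_ne hca hcb] at h
  calc JM n b * JM n c
      = ∑ p ∈ (univ.filter (· < b)) ×ˢ (univ.filter (· < c)),
        og (Equiv.swap p.1 b) * og (Equiv.swap p.2 c) := by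
        rw [JM, JM, Finset.sum_mul_sum, ← Finset.sum_product']
    _ = ∑ p ∈ (univ.filter (· < b)) ×ˢ (univ.filter (· < c)),
        og (Equiv.swap p.2 c) * og (Equiv.swap p.1 b) := key
    _ = JM n c * JM n b := by
        rw [JM, JM, Finset.sum_mul_sum, Finset.sum_product]
        exact Finset.sum_comm

lemma JM_commute (n : ℕ) (b c : Fin n) : Commute (JM n b) (JM n c) := by
  rcases lt_trichotomy b c with h | rfl | h
  · exact JM_mul_JM_of_lt h
  · exact Commute.refl _
  · exact (JM_mul_JM_of_lt h).symm

section Adjacent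

variable {n : ℕ} {ic is : Fin n} (his : ic.val + 1 = is.val)

noncomputable def Ksum (n : ℕ) (ic is : Fin n) : GA n :=
  ∑ a ∈ Finset.univ.filter (· < ic), og (Equiv.swap a is)

include his

lemma ic_lt_is : ic < is := by rw [Fin.lt_def]; omega

lemma JM_is_eq : JM n is = og (Equiv.swap ic is) + Ksum n ic is := by
  have hset : Finset.univ.filter (· < is) = insert ic (Finset.univ.filter (· < ic)) := by
    ext a
    simp only [Finset.mem_filter, Finset.mem_univ, true_and, Finset.mem_insert, Fin.lt_def,
      Fin.ext_iff]
    omega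
  rw [JM, hset, Finset.sum_insert (by simp)]
  rfl

lemma og_mul_JM_ic : og (Equiv.swap ic is) * JM n ic = Ksum n ic is * og (Equiv.swap ic is) := by
  rw [JM, Ksum, Finset.mul_sum, Finset.sum_mul]
  refine Finset.sum_congr rfl fun a ha => ?_
  have ha' : a < ic := by simpa using ha
  have h1 : a ≠ ic := ha'.ne
  have h2 : a ≠ is := (ha'.trans (ic_lt_is his)).ne
  rw [← map_mul, ← map_mul]
  congr 1
  have h := Equiv.mul_swap_eq_swap_mul (Equiv.swap ic is) a ic
  rwa [Equiv.swap_apply_of_ne_of_ne h1 h2, Equiv.swap_apply_left] at h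

lemma og_mul_Ksum : og (Equiv.swap ic is) * Ksum n ic is = JM n ic * og (Equiv.swap ic is) := by
  rw [JM, Ksum, Finset.mul_sum, Finset.sum_mul]
  refine Finset.sum_congr rfl fun a ha => ?_
  have ha' : a < ic := by simpa using ha
  have h1 : a ≠ ic := ha'.ne
  have h2 : a ≠ is := (ha'.trans (ic_lt_is his)).ne
  rw [← map_mul, ← map_mul]
  congr 1
  have h := Equiv.mul_swap_eq_swap_mul (Equiv.swap ic is) a is
  rwa [Equiv.swap_apply_of_ne_of_ne h1 h2, Equiv.swap_apply_right] at h

lemma og_mul_JM_ic' : og (Equiv.swap ic is) * JM n ic = JM n is * og (Equiv.swap ic is) - 1 := by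
  rw [og_mul_JM_ic his, JM_is_eq his]
  rw [add_mul, ← map_mul, Equiv.swap_mul_self, map_one]
  abel

lemma og_mul_JM_is' : og (Equiv.swap ic is) * JM n is = JM n ic * og (Equiv.swap ic is) + 1 := by
  rw [JM_is_eq his, mul_add, ← map_mul, Equiv.swap_mul_self, map_one, og_mul_Ksum his]
  abel

lemma og_commute_JM_of_ne {b : Fin n} (hbic : b ≠ ic) (hbis : b ≠ is) :
    og (Equiv.swap ic is) * JM n b = JM n b * og (Equiv.swap ic is) := by
  rw [JM, Finset.mul_sum, Finset.sum_mul]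
  have hmem : ∀ a : Fin n, a < b ↔ Equiv.swap ic is a < b := by
    intro a
    have hvic : b.val ≠ ic.val := fun h => hbic (Fin.ext h)
    have hvis : b.val ≠ is.val := fun h => hbis (Fin.ext h)
    rcases eq_or_ne a ic with rfl | h1
    · rw [Equiv.swap_apply_left, Fin.lt_def, Fin.lt_def]; omega
    · rcases eq_or_ne a is with rfl | h2
      · rw [Equiv.swap_apply_right, Fin.lt_def, Fin.lt_def]; omega
      · rw [Equiv.swap_apply_of_ne_of_ne h1 h2]
  refine Finset.sum_nbij' (fun a => Equiv.swap ic is a) (fun a => Equiv.swap ic is a)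
    ?_ ?_ (fun a _ => Equiv.swap_apply_self _ _ _) (fun a _ => Equiv.swap_apply_self _ _ _) ?_
  · intro a ha
    simp only [Finset.mem_filter, Finset.mem_univ, true_and] at ha ⊢
    exact (hmem a).1 ha
  · intro a ha
    simp only [Finset.mem_filter, Finset.mem_univ, true_and] at ha ⊢
    exact (hmem a).1 ha
  · intro a ha
    rw [← map_mul, ← map_mul]
    congr 1
    have h := Equiv.mul_swap_eq_swap_mul (Equiv.swap ic is) a b
    rwa [Equiv.swap_apply_of_ne_of_ne hbic hbis] at h

lemma og_commute_JM_add :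
    Commute (og (Equiv.swap ic is)) (JM n ic + JM n is) := by
  unfold Commute SemiconjBy
  rw [mul_add, add_mul, og_mul_JM_ic' his, og_mul_JM_is' his]
  abel

lemma og_commute_JM_mul :
    Commute (og (Equiv.swap ic is)) (JM n ic * JM n is) := by
  unfold Commute SemiconjBy
  calc og (Equiv.swap ic is) * (JM n ic * JM n is)
      = (og (Equiv.swap ic is) * JM n ic) * JM n is := by rw [mul_assoc]
    _ = (JM n is * og (Equiv.swap ic is) - 1) * JM n is := by rw [og_mul_JM_ic' his]
    _ = JM n is * (og (Equiv.swap ic is) * JM n is) - JM n is := by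
        rw [sub_mul, one_mul, mul_assoc]
    _ = JM n is * (JM n ic * og (Equiv.swap ic is) + 1) - JM n is := by rw [og_mul_JM_is' his]
    _ = JM n is * JM n ic * og (Equiv.swap ic is) := by rw [mul_add, mul_one, mul_assoc]; abel
    _ = JM n ic * JM n is * og (Equiv.swap ic is) := by rw [(JM_commute n is ic).eq]

end Adjacent

/-- The (commutative) subalgebra generated by the Jucys–Murphy elements. -/
noncomputable def Csub (n : ℕ) : Subalgebra ℂ (GA n) :=
  Algebra.adjoin ℂ (Set.range (JM n))

noncomputable instance (n : ℕ) : CommRing (Csub n) :=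
  Algebra.adjoinCommRingOfComm ℂ (by
    rintro _ ⟨b, rfl⟩ _ ⟨c, rfl⟩
    exact (JM_commute n b c).eq)

noncomputable def jj (n : ℕ) (b : Fin n) : Csub n :=
  ⟨JM n b, Algebra.subset_adjoin ⟨b, rfl⟩⟩

/-- Elements of `Csub n` whose image commutes with a fixed group algebra element `t`. -/
noncomputable def Zcent (n : ℕ) (t : GA n) : Subalgebra ℂ (Csub n) :=
  (Subalgebra.centralizer ℂ {t}).comap (Csub n).val

lemma mem_Zcent {n : ℕ} {t : GA n} {x : Csub n} :
    x ∈ Zcent n t ↔ t * (x : GA n) = (x : GA n) * t := by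
  simp [Zcent, Subalgebra.mem_centralizer_iff]

section Newton

private lemma newton_id {R : Type*} [CommRing R] (x y : R) (k : ℕ) :
    x ^ (k + 2) + y ^ (k + 2)
      = (x + y) * (x ^ (k + 1) + y ^ (k + 1)) - (x * y) * (x ^ k + y ^ k) := by ring

private lemma symmon_id {R : Type*} [CommRing R] (x y : R) (a k : ℕ) :
    x ^ a * y ^ (a + k) + x ^ (a + k) * y ^ a = (x * y) ^ a * (x ^ k + y ^ k) := by ring

private lemma symmon_id' {R : Type*} [CommRing R] (x y : R) (b k : ℕ) :
    x ^ (b + k) * y ^ b + x ^ b * y ^ (b + k) = (x * y) ^ b * (x ^ k + y ^ k) := by ring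

variable {n : ℕ} {t : GA n} {x y : Csub n}
  (hxy : x + y ∈ Zcent n t) (hxym : x * y ∈ Zcent n t)

include hxy hxym

lemma pow_add_pow_mem_Zcent : ∀ k : ℕ, x ^ k + y ^ k ∈ Zcent n t := by
  intro k
  induction k using Nat.strong_induction_on with
  | _ k ih =>
    match k with
    | 0 => rw [pow_zero, pow_zero]; exact (Zcent n t).add_mem (Zcent n t).one_mem (Zcent n t).one_mem
    | 1 => simpa using hxy
    | (k + 2) =>
      have h1 := ih (k + 1) (by omega)
      have h0 := ih k (by omega)
      rw [show x ^ (k + 2) + y ^ (k + 2) = (x + y) * (x ^ (k + 1) + y ^ (k + 1)) - (x * y) * (x ^ k + y ^ k) from newton_id x y k]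
      exact (Zcent n t).sub_mem ((Zcent n t).mul_mem hxy h1) ((Zcent n t).mul_mem hxym h0)

lemma sym_monomial_mem_Zcent (a b : ℕ) : x ^ a * y ^ b + x ^ b * y ^ a ∈ Zcent n t := by
  rcases le_total a b with h | h
  · obtain ⟨k, rfl⟩ := Nat.exists_eq_add_of_le h
    rw [show x ^ a * y ^ (a + k) + x ^ (a + k) * y ^ a = (x * y) ^ a * (x ^ k + y ^ k) from symmon_id x y a k]
    exact (Zcent n t).mul_mem ((Zcent n t).pow_mem hxym a) (pow_add_pow_mem_Zcent hxy hxym k)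
  · obtain ⟨k, rfl⟩ := Nat.exists_eq_add_of_le h
    rw [show x ^ (b + k) * y ^ b + x ^ b * y ^ (b + k) = (x * y) ^ b * (x ^ k + y ^ k) from symmon_id' x y b k]
    exact (Zcent n t).mul_mem ((Zcent n t).pow_mem hxym b) (pow_add_pow_mem_Zcent hxy hxym k)

end Newton

noncomputable def Qm (n : ℕ) (d : Fin n →₀ ℕ) : Csub n := ∏ b, jj n b ^ d b

lemma val_Qm (n : ℕ) (d : Fin n →₀ ℕ) :
    ((Qm n d : Csub n) : GA n) = (List.ofFn fun b : Fin n => JM n b ^ d b).prod := by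
  rw [Qm, ← Fin.prod_ofFn (fun b : Fin n => jj n b ^ d b)]
  calc ((((List.ofFn fun b : Fin n => jj n b ^ d b).prod : Csub n)) : GA n)
      = ((List.ofFn fun b : Fin n => jj n b ^ d b).map ((Csub n).val)).prod :=
        map_list_prod ((Csub n).val) _
    _ = (List.ofFn fun b : Fin n => JM n b ^ d b).prod := by
        rw [List.map_ofFn]
        congr 1

/-- Evaluation of a multivariate polynomial `f ∈ ℂ[x_1,…,x_n]` at the Jucys–Murphy elements,
each monomial being evaluated as the ordered product `J_1^{e_1} J_2^{e_2} ⋯ J_n^{e_n}`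
(since the Jucys–Murphy elements pairwise commute, this agrees with any other ordering). -/
noncomputable def evalJM (n : ℕ) (f : MvPolynomial (Fin n) ℂ) :
    MonoidAlgebra ℂ (Equiv.Perm (Fin n)) :=
  ∑ s ∈ f.support, f.coeff s • (List.ofFn fun b : Fin n => JM n b ^ s b).prod

lemma evalJM_eq (n : ℕ) (f : MvPolynomial (Fin n) ℂ) :
    evalJM n f = ∑ d ∈ f.support, MvPolynomial.coeff d f • ((Qm n d : Csub n) : GA n) := by
  rw [evalJM]
  exact Finset.sum_congr rfl fun d _ => by rw [val_Qm]

section Key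

variable {n : ℕ} {ic is : Fin n} (his : ic.val + 1 = is.val)

include his

lemma key_mem (d : Fin n →₀ ℕ) :
    Qm n d + Qm n (Finsupp.equivMapDomain (Equiv.swap ic is) d)
      ∈ Zcent n (og (Equiv.swap ic is)) := by
  set τ := Equiv.swap ic is with hτ
  set d' := Finsupp.equivMapDomain τ d with hd'
  have hne : ic ≠ is := (ic_lt_is his).ne
  have hsub : ({ic, is} : Finset (Fin n)) ⊆ Finset.univ := Finset.subset_univ _
  have hsplit : ∀ e : Fin n →₀ ℕ,
      Qm n e = (∏ b ∈ Finset.univ \ {ic, is}, jj n b ^ e b) * (jj n ic ^ e ic * jj n is ^ e is) := by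
    intro e
    rw [Qm, ← Finset.prod_sdiff hsub, Finset.prod_pair hne]
    rfl
  have hd'apply : ∀ b : Fin n, d' b = d (τ b) := by
    intro b
    rw [hd', Finsupp.equivMapDomain_apply, hτ, Equiv.symm_swap]
  have hPP : (∏ b ∈ Finset.univ \ {ic, is}, jj n b ^ d' b)
      = ∏ b ∈ Finset.univ \ {ic, is}, jj n b ^ d b := by
    refine Finset.prod_congr rfl fun b hb => ?_
    simp only [Finset.mem_sdiff, Finset.mem_insert, Finset.mem_singleton, not_or] at hb
    rw [hd'apply b, hτ, Equiv.swap_apply_of_ne_of_ne hb.2.1 hb.2.2]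
  have hic : d' ic = d is := by rw [hd'apply, hτ, Equiv.swap_apply_left]
  have his' : d' is = d ic := by rw [hd'apply, hτ, Equiv.swap_apply_right]
  rw [hsplit d, hsplit d', hPP, hic, his', ← mul_add]
  have hxy : jj n ic + jj n is ∈ Zcent n (og τ) := by
    rw [mem_Zcent]
    exact og_commute_JM_add his
  have hxym : jj n ic * jj n is ∈ Zcent n (og τ) := by
    rw [mem_Zcent]
    exact og_commute_JM_mul his
  refine (Zcent n (og τ)).mul_mem ?_ ?_
  · refine _root_.prod_mem (S := Zcent n (og τ)) fun b hb => ?_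
    simp only [Finset.mem_sdiff, Finset.mem_insert, Finset.mem_singleton, not_or] at hb
    refine (Zcent n (og τ)).pow_mem ?_ _
    rw [mem_Zcent]
    exact og_commute_JM_of_ne his hb.2.1 hb.2.2
  · exact sym_monomial_mem_Zcent hxy hxym (d ic) (d is)

end Key

lemma step_commute {n : ℕ} {ic is : Fin n} (his : ic.val + 1 = is.val)
    (f : MvPolynomial (Fin n) ℂ) (hf : f.IsSymmetric) :
    og (Equiv.swap ic is) * evalJM n f = evalJM n f * og (Equiv.swap ic is) := by
  set τ := Equiv.swap ic is with hτ
  have hcoeff : ∀ d : Fin n →₀ ℕ,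
      MvPolynomial.coeff (Finsupp.equivMapDomain τ d) f = MvPolynomial.coeff d f := by
    intro d
    conv_lhs => rw [← hf τ]
    rw [Finsupp.equivMapDomain_eq_mapDomain,
      MvPolynomial.coeff_rename_mapDomain _ (Equiv.injective τ)]
  have hinv : ∀ d : Fin n →₀ ℕ, Finsupp.equivMapDomain τ (Finsupp.equivMapDomain τ d) = d := by
    intro d
    ext b
    simp [Finsupp.equivMapDomain_apply, hτ, Equiv.symm_swap, Equiv.swap_apply_self]
  have hre : ∀ X : (Fin n →₀ ℕ) → GA n,
      ∑ d ∈ f.support, MvPolynomial.coeff d f • X (Finsupp.equivMapDomain τ d)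
        = ∑ d ∈ f.support, MvPolynomial.coeff d f • X d := by
    intro X
    refine Finset.sum_nbij' (fun d => Finsupp.equivMapDomain τ d)
      (fun d => Finsupp.equivMapDomain τ d) ?_ ?_ (fun d _ => hinv d) (fun d _ => hinv d) ?_
    · intro d hd
      rw [MvPolynomial.mem_support_iff, hcoeff]
      exact MvPolynomial.mem_support_iff.mp hd
    · intro d hd
      rw [MvPolynomial.mem_support_iff, hcoeff]
      exact MvPolynomial.mem_support_iff.mp hd
    · intro d _
      rw [hcoeff]
  have e1 : og τ * evalJM n f
      = ∑ d ∈ f.support, MvPolynomial.coeff d f • (og τ * ((Qm n d : Csub n) : GA n)) := by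
    rw [evalJM_eq, Finset.mul_sum]
    exact Finset.sum_congr rfl fun d _ => mul_smul_comm _ _ _
  have e2 : evalJM n f * og τ
      = ∑ d ∈ f.support, MvPolynomial.coeff d f • (((Qm n d : Csub n) : GA n) * og τ) := by
    rw [evalJM_eq, Finset.sum_mul]
    exact Finset.sum_congr rfl fun d _ => smul_mul_assoc _ _ _
  have e1' : og τ * evalJM n f
      = ∑ d ∈ f.support, MvPolynomial.coeff d f •
        (og τ * ((Qm n (Finsupp.equivMapDomain τ d) : Csub n) : GA n)) :=
    e1.trans (hre fun d => og τ * ((Qm n d : Csub n) : GA n)).symm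
  have e2' : evalJM n f * og τ
      = ∑ d ∈ f.support, MvPolynomial.coeff d f •
        (((Qm n (Finsupp.equivMapDomain τ d) : Csub n) : GA n) * og τ) :=
    e2.trans (hre fun d => ((Qm n d : Csub n) : GA n) * og τ).symm
  have h2 : (2 : ℂ) • (og τ * evalJM n f) = (2 : ℂ) • (evalJM n f * og τ) := by
    have hL : og τ * evalJM n f + og τ * evalJM n f
        = ∑ d ∈ f.support, MvPolynomial.coeff d f •
            (og τ * (((Qm n d : Csub n) : GA n)
              + ((Qm n (Finsupp.equivMapDomain τ d) : Csub n) : GA n))) := by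
      nth_rewrite 1 [e1]
      nth_rewrite 1 [e1']
      rw [← Finset.sum_add_distrib]
      exact Finset.sum_congr rfl fun d _ => by rw [mul_add, smul_add]
    have hR : evalJM n f * og τ + evalJM n f * og τ
        = ∑ d ∈ f.support, MvPolynomial.coeff d f •
            ((((Qm n d : Csub n) : GA n)
              + ((Qm n (Finsupp.equivMapDomain τ d) : Csub n) : GA n)) * og τ) := by
      nth_rewrite 1 [e2]
      nth_rewrite 1 [e2']
      rw [← Finset.sum_add_distrib]
      exact Finset.sum_congr rfl fun d _ => by rw [add_mul, smul_add]
    rw [two_smul, two_smul, hL, hR]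
    refine Finset.sum_congr rfl fun d _ => ?_
    have hk := key_mem his d
    rw [mem_Zcent] at hk
    rw [Subalgebra.coe_add] at hk
    rw [hk]
  have h3 := congrArg (fun z : GA n => (2 : ℂ)⁻¹ • z) h2
  simpa [smul_smul] using h3

/-- For every `n ≥ 1` and every symmetric polynomial `f` in `n` variables over `ℂ`,
the element `f(J_1,…,J_n)` lies in the center of the group algebra `ℂ[S_n]`. -/
theorem evalJM_symmetric_mem_center (n : ℕ) (hn : 1 ≤ n) (f : MvPolynomial (Fin n) ℂ)
    (hf : f.IsSymmetric) :
    evalJM n f ∈ Subalgebra.center ℂ (MonoidAlgebra ℂ (Equiv.Perm (Fin n))) := by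
  obtain ⟨m, rfl⟩ : ∃ m, n = m + 1 := ⟨n - 1, by omega⟩
  rw [Subalgebra.mem_center_iff]
  have hgen : ∀ g : Equiv.Perm (Fin (m + 1)),
      og g * evalJM (m + 1) f = evalJM (m + 1) f * og g := by
    intro g
    have hg : g ∈ Submonoid.closure
        (Set.range fun i : Fin m => Equiv.swap (Fin.castSucc i) (Fin.succ i)) := by
      rw [Equiv.Perm.mclosure_swap_castSucc_succ]
      exact Submonoid.mem_top g
    induction hg using Submonoid.closure_induction with
    | mem x hx =>
      obtain ⟨i, rfl⟩ := hx
      exact step_commute (by simp) f hf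
    | one => rw [map_one, one_mul, mul_one]
    | mul x y hx hy ihx ihy => rw [map_mul, mul_assoc, ihy, ← mul_assoc, ihx, mul_assoc]
  intro y
  induction y using MonoidAlgebra.induction_on with
  | of g => exact hgen g
  | add a b ha hb => rw [add_mul, mul_add, ha, hb]
  | smul r a ha => rw [smul_mul_assoc, mul_smul_comm, ha]
end

section
/- For every n ≥ 1 and every d ≥ 0, the d-th elementary symmetric polynomial evaluated at the Jucys–Murphy elements satisfies e_d(J_1,…,J_n) = Σ_{σ ∈ S_n, ℓ*(σ) = d} σ in ℂ[S_n]; equivalently, Π_{b=1}^n (X + J_b) = Σ_{σ ∈ S_n} X^{n − ℓ*(σ)} σ in the polynomial ring over ℂ[S_n] (Jucys' theorem). -/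
/-- The colength `ℓ*(σ) = n − c(σ)`, where `c(σ)` is the number of cycles of `σ`
(fixed points counted as cycles of length 1). -/
noncomputable def colength {n : ℕ} (σ : Equiv.Perm (Fin n)) : ℕ :=
  n - (σ.cycleType.card + (n - σ.support.card))

/-- The `d`-th elementary symmetric polynomial evaluated at the Jucys–Murphy elements:
`e_d(J_1,…,J_n) = Σ_{S ⊆ {1,…,n}, |S| = d} Π_{b ∈ S} J_b`, each product taken in
increasing order (the `J_b` pairwise commute, so any order gives the same element). -/
noncomputable def esymmJM (n : ℕ) (d : ℕ) : MonoidAlgebra ℂ (Equiv.Perm (Fin n)) :=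
  ∑ S ∈ Finset.univ.powersetCard d, ((S.sort (· ≤ ·)).map (JM n)).prod

section JucysProof

open Equiv Finset Polynomial

def Gs (n m : ℕ) : Finset (Equiv.Perm (Fin n)) :=
  Finset.univ.filter (fun σ => ∀ c : Fin n, m ≤ c.val → σ c = c)

def firstm (n m : ℕ) : Finset (Fin n) := Finset.univ.filter (fun c => c.val < m)

variable {α : Type*} [DecidableEq α] [Fintype α]

lemma perm_apply_inv_self' {β : Type*} (f : Perm β) (x : β) : f (f⁻¹ x) = x := by
  simp only [Equiv.Perm.coe_inv, Equiv.apply_symm_apply]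

/-- Powers of the "inserted" permutation agree with powers of the cycle. -/
lemma insert_pow_claim {c : Perm α} {a b : α} (hb : b ∉ c.support) (ha : a ∈ c.support) :
    ∀ j : ℕ, 1 ≤ j → (∀ i, 0 < i → i < j → (c ^ i) a ≠ a) →
      ((c * Equiv.swap a b) ^ (j + 1)) a = (c ^ j) a := by
  have hab : a ≠ b := fun h => hb (h ▸ ha)
  have hba : b ≠ a := hab.symm
  have hcb : c b = b := by simpa using (Equiv.Perm.notMem_support).1 hb
  have hga : (c * Equiv.swap a b) a = b := by
    simp [Equiv.Perm.mul_apply, Equiv.swap_apply_left, hcb]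
  intro j
  induction j with
  | zero => omega
  | succ j ih =>
    intro _ hmid
    rcases Nat.eq_or_lt_of_le (Nat.one_le_iff_ne_zero.2 (Nat.succ_ne_zero j)) with h1 | h1
    · -- j + 1 = 1
      have hj0 : j = 0 := by omega
      subst hj0
      show ((c * Equiv.swap a b) ^ 2) a = (c ^ 1) a
      rw [pow_two, Equiv.Perm.mul_apply, hga, pow_one]
      simp [Equiv.Perm.mul_apply, Equiv.swap_apply_right]
    · -- j ≥ 1
      have hj1 : 1 ≤ j := by omega
      have hprev : ((c * Equiv.swap a b) ^ (j + 1)) a = (c ^ j) a :=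
        ih hj1 (fun i hi hij => hmid i hi (by omega))
      have hne_a : (c ^ j) a ≠ a := hmid j hj1 (by omega)
      have hne_b : (c ^ j) a ≠ b := by
        intro h
        exact hb (h ▸ (Equiv.Perm.pow_apply_mem_support.2 ha))
      calc ((c * Equiv.swap a b) ^ (j + 1 + 1)) a
          = (c * Equiv.swap a b) (((c * Equiv.swap a b) ^ (j + 1)) a) := by
            rw [← Equiv.Perm.mul_apply, ← pow_succ']
        _ = (c ^ (j + 1)) a := by
            rw [hprev, Equiv.Perm.mul_apply, Equiv.swap_apply_of_ne_of_ne hne_a hne_b,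
              ← Equiv.Perm.mul_apply, ← pow_succ']

lemma isCycle_insert {c : Perm α} (hc : c.IsCycle) {a b : α}
    (hb : b ∉ c.support) (ha : a ∈ c.support) : (c * Equiv.swap a b).IsCycle := by
  have hab : a ≠ b := fun h => hb (h ▸ ha)
  have hcb : c b = b := Equiv.Perm.notMem_support.1 hb
  have hca : c a ≠ a := Equiv.Perm.mem_support.1 ha
  set g := c * Equiv.swap a b with hg
  have hga : g a = b := by simp [hg, Equiv.Perm.mul_apply, Equiv.swap_apply_left, hcb]
  have hgb : g b = c a := by simp [hg, Equiv.Perm.mul_apply, Equiv.swap_apply_right]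
  refine ⟨a, by rw [hga]; exact hab.symm, ?_⟩
  intro y hy
  by_cases hya : y = a
  · subst hya; exact Equiv.Perm.SameCycle.refl _ _
  by_cases hyb : y = b
  · subst hyb; exact ⟨1, by simpa using hga⟩
  -- y ∉ {a, b}, so g y = c y ≠ y, y ∈ support c
  have hgy : g y = c y := by
    simp [hg, Equiv.Perm.mul_apply, Equiv.swap_apply_of_ne_of_ne hya hyb]
  have hcy : c y ≠ y := by rw [← hgy]; exact hy
  have hsc : c.SameCycle a y := hc.sameCycle hca hcy
  obtain ⟨i, hipos, -, hi⟩ := hsc.exists_pow_eq c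
  have hex : ∃ j, 0 < j ∧ (c ^ j) a = y := ⟨i, hipos, hi⟩
  classical
  have hjpos : 0 < Nat.find hex := (Nat.find_spec hex).1
  have hjy : (c ^ Nat.find hex) a = y := (Nat.find_spec hex).2
  have hmid : ∀ i, 0 < i → i < Nat.find hex → (c ^ i) a ≠ a := by
    intro i hi hij h
    have h2 : (c ^ (Nat.find hex - i)) ((c ^ i) a) = (c ^ Nat.find hex) a := by
      rw [← Equiv.Perm.mul_apply, ← pow_add, Nat.sub_add_cancel (le_of_lt hij)]
    rw [h, hjy] at h2
    exact Nat.find_min hex (show Nat.find hex - i < Nat.find hex by omega) ⟨by omega, h2⟩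
  refine ⟨((Nat.find hex : ℕ) + 1 : ℕ), ?_⟩
  rw [zpow_natCast]
  rw [insert_pow_claim hb ha (Nat.find hex) hjpos hmid]
  exact hjy

lemma support_mul_swap {σ : Perm α} {a b : α} (hb : σ b = b) (hab : a ≠ b) (ha : σ a ≠ a) :
    (σ * Equiv.swap a b).support = insert b σ.support := by
  ext x
  simp only [Equiv.Perm.mem_support, Finset.mem_insert, Equiv.Perm.mul_apply]
  by_cases hxa : x = a
  · subst hxa
    have hba : b ≠ x := hab.symm
    simp [Equiv.swap_apply_left, hb, hab, ha, hba]
  by_cases hxb : x = b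
  · subst hxb
    have hσa : σ a ≠ x := fun h => hab (σ.injective (h.trans hb.symm))
    simp [Equiv.swap_apply_right, hσa]
  · simp only [Equiv.swap_apply_of_ne_of_ne hxa hxb]
    constructor
    · intro h; exact Or.inr h
    · rintro (h | h)
      · exact absurd h hxb
      · exact h



variable {α : Type*} [DecidableEq α] [Fintype α]

lemma card_cycleType_le (σ : Perm α) : Multiset.card σ.cycleType ≤ σ.support.card := by
  have h := Equiv.Perm.sum_cycleType σ
  have h2 : Multiset.card σ.cycleType • 1 ≤ σ.cycleType.sum :=
    Multiset.card_nsmul_le_sum (fun x hx => (Equiv.Perm.two_le_of_mem_cycleType hx).trans' (by omega))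
  simpa [h] using h2

lemma colength_eq {n : ℕ} (σ : Perm (Fin n)) :
    colength σ = σ.support.card - Multiset.card σ.cycleType := by
  have h1 := card_cycleType_le σ
  have h2 : σ.support.card ≤ n := by
    simpa using Finset.card_le_univ σ.support
  unfold colength
  omega

lemma colength_le_card_support {n : ℕ} (σ : Perm (Fin n)) :
    colength σ ≤ σ.support.card := by
  rw [colength_eq]; omega

lemma colength_mul_swap {n : ℕ} {σ : Perm (Fin n)} {a b : Fin n}
    (hab : a ≠ b) (hb : σ b = b) :
    colength (σ * Equiv.swap a b) = colength σ + 1 := by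
  have hbs : b ∉ σ.support := Equiv.Perm.notMem_support.2 hb
  by_cases ha : σ a = a
  · -- disjoint case
    have hd : Equiv.Perm.Disjoint σ (Equiv.swap a b) := by
      intro x
      by_cases hxa : x = a
      · exact Or.inl (hxa ▸ ha)
      by_cases hxb : x = b
      · exact Or.inl (hxb ▸ hb)
      · exact Or.inr (Equiv.swap_apply_of_ne_of_ne hxa hxb)
    have hct : (σ * Equiv.swap a b).cycleType = σ.cycleType + (Equiv.swap a b).cycleType :=
      hd.cycleType_mul
    have hswct : (Equiv.swap a b).cycleType = {2} := by
      rw [(Equiv.Perm.isCycle_swap hab).cycleType, Equiv.Perm.card_support_swap hab]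
    have hsup : (σ * Equiv.swap a b).support = σ.support ∪ (Equiv.swap a b).support :=
      hd.support_mul
    have hcard : (σ * Equiv.swap a b).support.card = σ.support.card + 2 := by
      rw [hsup, Finset.card_union_of_disjoint hd.disjoint_support,
        Equiv.Perm.card_support_swap hab]
    have hk : Multiset.card (σ * Equiv.swap a b).cycleType = Multiset.card σ.cycleType + 1 := by
      rw [hct, hswct]; simp
    have := card_cycleType_le σ
    rw [colength_eq, colength_eq, hcard, hk]
    omega
  · -- a in a cycle of σ
    have ha' : a ∈ σ.support := Equiv.Perm.mem_support.2 ha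
    set c := σ.cycleOf a with hcdef
    have hcmem : c ∈ σ.cycleFactorsFinset :=
      Equiv.Perm.cycleOf_mem_cycleFactorsFinset_iff.mpr ha'
    have hc : c.IsCycle := Equiv.Perm.isCycle_cycleOf σ ha
    have hdρc : Equiv.Perm.Disjoint (σ * c⁻¹) c :=
      Equiv.Perm.disjoint_mul_inv_of_mem_cycleFactorsFinset hcmem
    set ρ := σ * c⁻¹ with hρdef
    have hσ : ρ * c = σ := by rw [hρdef]; group
    have hsupc : c.support ⊆ σ.support := Equiv.Perm.support_cycleOf_le σ a
    have hac : a ∈ c.support := by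
      rw [hcdef, Equiv.Perm.mem_support_cycleOf_iff' ha]
    have hbc : b ∉ c.support := fun h => hbs (hsupc h)
    have hcb : c b = b := Equiv.Perm.notMem_support.1 hbc
    set c' := c * Equiv.swap a b with hc'def
    have hc' : c'.IsCycle := isCycle_insert hc hbc hac
    have hsc' : c'.support = insert b c.support :=
      support_mul_swap hcb hab (Equiv.Perm.mem_support.1 hac)
    have hτ : σ * Equiv.swap a b = ρ * c' := by
      rw [hc'def, ← mul_assoc, hσ]
    have hdρc' : Equiv.Perm.Disjoint ρ c' := by
      intro x
      by_cases hx : c' x = x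
      · exact Or.inr hx
      have hxs : x ∈ c'.support := Equiv.Perm.mem_support.2 hx
      rw [hsc', Finset.mem_insert] at hxs
      rcases hxs with hxb | hxc
      · subst hxb
        have hcinvb : c⁻¹ x = x := c.injective (by rw [perm_apply_inv_self' _, hcb])
        exact Or.inl (by rw [hρdef, Equiv.Perm.mul_apply, hcinvb, hb])
      · rcases hdρc x with h | h
        · exact Or.inl h
        · exact absurd h (Equiv.Perm.mem_support.1 hxc)
    have hctτ : (σ * Equiv.swap a b).cycleType = ρ.cycleType + c'.cycleType := by
      rw [hτ]; exact hdρc'.cycleType_mul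
    have hctσ : σ.cycleType = ρ.cycleType + c.cycleType := by
      rw [← hσ]; exact hdρc.cycleType_mul
    have hkc : Multiset.card c.cycleType = 1 := by rw [hc.cycleType]; rfl
    have hkc' : Multiset.card c'.cycleType = 1 := by rw [hc'.cycleType]; rfl
    have hsupτ : (σ * Equiv.swap a b).support.card = ρ.support.card + c'.support.card := by
      rw [hτ, hdρc'.support_mul, Finset.card_union_of_disjoint hdρc'.disjoint_support]
    have hsupσ : σ.support.card = ρ.support.card + c.support.card := by
      rw [← hσ, hdρc.support_mul, Finset.card_union_of_disjoint hdρc.disjoint_support]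
    have hsc'card : c'.support.card = c.support.card + 1 := by
      rw [hsc', Finset.card_insert_of_notMem hbc]
    have hle := card_cycleType_le σ
    rw [colength_eq, colength_eq, hsupτ, hsupσ, hctτ, hctσ] at *
    simp only [Multiset.card_add, hkc, hkc'] at *
    omega



lemma mem_Gs {n m : ℕ} {σ : Equiv.Perm (Fin n)} :
    σ ∈ Gs n m ↔ ∀ c : Fin n, m ≤ c.val → σ c = c := by
  simp [Gs]

lemma Gs_apply_lt {n m : ℕ} {σ : Equiv.Perm (Fin n)} (hσ : σ ∈ Gs n m)
    {a : Fin n} (ha : a.val < m) : (σ a).val < m := by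
  by_contra h
  push_neg at h
  have h1 : σ (σ a) = σ a := (mem_Gs.1 hσ) _ h
  have h2 := σ.injective h1
  rw [h2] at h
  omega

lemma Gs_top (n : ℕ) : Gs n n = Finset.univ := by
  ext σ
  simp only [mem_Gs, Finset.mem_univ, iff_true]
  intro c hc
  exact absurd c.isLt (not_lt.2 hc)

lemma Gs_zero (n : ℕ) : Gs n 0 = {1} := by
  ext σ
  simp only [mem_Gs, Finset.mem_singleton]
  constructor
  · intro h
    exact Equiv.ext fun x => h x (Nat.zero_le _)
  · intro h c _
    rw [h]
    rfl

lemma sum_Gs_succ {M : Type*} [AddCommMonoid M] {n : ℕ} (b : Fin n)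
    (F : Equiv.Perm (Fin n) → M) :
    ∑ τ ∈ Gs n (b.val + 1), F τ =
      ∑ σ ∈ Gs n b.val, F σ +
        ∑ σ ∈ Gs n b.val, ∑ a ∈ Finset.univ.filter (· < b), F (σ * Equiv.swap a b) := by
  classical
  rw [← Finset.sum_filter_add_sum_filter_not (Gs n (b.val + 1)) (fun τ => τ b = b)]
  congr 1
  · -- fixed part
    apply Finset.sum_congr _ (fun _ _ => rfl)
    ext τ
    simp only [Finset.mem_filter, mem_Gs]
    constructor
    · rintro ⟨h1, h2⟩ c hc
      rcases Nat.eq_or_lt_of_le hc with h | h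
      · have : c = b := Fin.ext h.symm
        rw [this, h2]
      · exact h1 c h
    · intro h
      exact ⟨fun c hc => h c (by omega), h b le_rfl⟩
  · -- moving part
    rw [← Finset.sum_product']
    apply Finset.sum_nbij' (i := fun τ => (τ * Equiv.swap (τ⁻¹ b) b, τ⁻¹ b))
      (j := fun p => p.1 * Equiv.swap p.2 b)
    · -- hi : maps into product
      intro τ hτ
      simp only [Finset.mem_filter] at hτ
      obtain ⟨hτ1, hτ2⟩ := hτ
      rw [mem_Gs] at hτ1
      have hanb : τ⁻¹ b ≠ b := fun h => hτ2 (by conv_lhs => rw [← h, perm_apply_inv_self' _])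
      have halt : (τ⁻¹ b).val < b.val + 1 := by
        by_contra h
        push_neg at h
        have h2 := hτ1 _ h
        rw [perm_apply_inv_self' _] at h2
        exact hanb h2.symm
      have haltb : τ⁻¹ b < b := by
        rw [Fin.lt_def]
        have : (τ⁻¹ b).val ≠ b.val := fun h => hanb (Fin.ext h)
        omega
      simp only [Finset.mem_product, Finset.mem_filter, Finset.mem_univ, true_and]
      refine ⟨?_, haltb⟩
      rw [mem_Gs]
      intro c hc
      by_cases hcb : c = b
      · subst hcb
        rw [Equiv.Perm.mul_apply, Equiv.swap_apply_right, perm_apply_inv_self' _]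
      · have hcb' : c.val ≠ b.val := fun h => hcb (Fin.ext h)
        have hca : c ≠ τ⁻¹ b := by
          intro h
          have h3 := haltb
          rw [Fin.lt_def] at h3
          rw [h] at hc
          omega
        rw [Equiv.Perm.mul_apply, Equiv.swap_apply_of_ne_of_ne hca hcb]
        exact hτ1 c (by omega)
    · -- hj : maps into filter
      rintro ⟨σ, a⟩ hp
      simp only [Finset.mem_product, Finset.mem_filter, Finset.mem_univ, true_and] at hp
      obtain ⟨hσ, hab⟩ := hp
      have habv : a.val < b.val := hab
      simp only [Finset.mem_filter]
      constructor
      · rw [mem_Gs]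
        intro c hc
        have hcb : c ≠ b := fun h => by subst h; omega
        have hca : c ≠ a := fun h => by subst h; omega
        rw [Equiv.Perm.mul_apply, Equiv.swap_apply_of_ne_of_ne hca hcb]
        exact (mem_Gs.1 hσ) c (by omega)
      · rw [Equiv.Perm.mul_apply, Equiv.swap_apply_right]
        intro h
        have := Gs_apply_lt hσ habv
        rw [h] at this
        omega
    · -- left inverse
      intro τ hτ
      simp only [Finset.mem_filter] at hτ
      rw [mul_assoc, Equiv.swap_mul_self, mul_one]
    · -- right inverse
      rintro ⟨σ, a⟩ hp
      simp only [Finset.mem_product, Finset.mem_filter, Finset.mem_univ, true_and] at hp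
      obtain ⟨hσ, hab⟩ := hp
      have habv : a.val < b.val := hab
      have hσb : σ b = b := (mem_Gs.1 hσ) b le_rfl
      have hτa : (σ * Equiv.swap a b) a = b := by
        rw [Equiv.Perm.mul_apply, Equiv.swap_apply_left, hσb]
      have hinv : (σ * Equiv.swap a b)⁻¹ b = a :=
        (σ * Equiv.swap a b).injective (by rw [perm_apply_inv_self' _, hτa])
      simp only [Prod.mk.injEq]
      constructor
      · rw [hinv, mul_assoc, Equiv.swap_mul_self, mul_one]
      · exact hinv
    · -- values agree
      intro τ hτ
      simp only
      rw [mul_assoc, Equiv.swap_mul_self, mul_one]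



lemma colength_one {n : ℕ} : colength (1 : Equiv.Perm (Fin n)) = 0 := by
  rw [colength_eq]
  simp

lemma support_subset_firstm {n m : ℕ} {σ : Equiv.Perm (Fin n)} (hσ : σ ∈ Gs n m) :
    σ.support ⊆ firstm n m := by
  intro x hx
  simp only [firstm, Finset.mem_filter, Finset.mem_univ, true_and]
  by_contra h
  push_neg at h
  exact (Equiv.Perm.mem_support.1 hx) ((mem_Gs.1 hσ) x h)

lemma card_firstm {n m : ℕ} (h : m ≤ n) : (firstm n m).card = m := by
  have : firstm n m = Finset.univ.map ⟨Fin.castLE h, Fin.castLE_injective h⟩ := by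
    ext x
    constructor
    · intro hx
      rw [Finset.mem_map]
      refine ⟨⟨x.val, ?_⟩, Finset.mem_univ _, Fin.ext rfl⟩
      simpa [firstm] using hx
    · intro hx
      rw [Finset.mem_map] at hx
      obtain ⟨d, -, hd⟩ := hx
      simp only [firstm, Finset.mem_filter, Finset.mem_univ, true_and]
      rw [← hd]
      exact d.isLt
  rw [this, Finset.card_map, Finset.card_univ, Fintype.card_fin]

lemma colength_le {n m : ℕ} (h : m ≤ n) {σ : Equiv.Perm (Fin n)} (hσ : σ ∈ Gs n m) :
    colength σ ≤ m := by
  rw [colength_eq]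
  have h1 := Finset.card_le_card (support_subset_firstm hσ)
  rw [card_firstm h] at h1
  omega

lemma P2 (n : ℕ) : ∀ m, m ≤ n →
    ((List.ofFn fun b : Fin n => Polynomial.X + Polynomial.C (JM n b)).take m).prod =
      ∑ σ ∈ Gs n m,
        Polynomial.C (MonoidAlgebra.of ℂ (Equiv.Perm (Fin n)) σ) *
          Polynomial.X ^ (m - colength σ) := by
  intro m
  induction m with
  | zero =>
    intro _
    rw [Gs_zero, List.take_zero, List.prod_nil, Finset.sum_singleton, colength_one]
    simp only [Nat.zero_sub, pow_zero, mul_one]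
    rw [MonoidAlgebra.of_apply, MonoidAlgebra.one_def.symm, map_one]
  | succ m ih =>
    intro hm
    have hmn : m < n := hm
    set b : Fin n := ⟨m, hmn⟩ with hbdef
    have hlen : m < (List.ofFn fun b : Fin n => Polynomial.X + Polynomial.C (JM n b)).length := by
      rw [List.length_ofFn]; exact hmn
    rw [List.prod_take_succ _ m hlen]
    have hget : (List.ofFn fun b : Fin n => Polynomial.X + Polynomial.C (JM n b))[m]'hlen =
        Polynomial.X + Polynomial.C (JM n b) := by
      simp [List.getElem_ofFn, hbdef]
    rw [hget, ih (le_of_lt hmn)]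
    have hb1 : b.val = m := rfl
    -- RHS via core lemma
    have hcore := sum_Gs_succ b (fun τ =>
      Polynomial.C (MonoidAlgebra.of ℂ (Equiv.Perm (Fin n)) τ) *
        Polynomial.X ^ (m + 1 - colength τ))
    rw [hb1] at hcore
    rw [hcore]
    rw [mul_add]
    congr 1
    · -- X part
      rw [Finset.sum_mul]
      apply Finset.sum_congr rfl
      intro σ hσ
      have hcl : colength σ ≤ m := colength_le (le_of_lt hmn) hσ
      rw [mul_assoc, ← pow_succ]
      congr 2
      omega
    · -- JM part
      have hJM : Polynomial.C (JM n b) =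
          ∑ a ∈ Finset.univ.filter (· < b),
            Polynomial.C (MonoidAlgebra.of ℂ (Equiv.Perm (Fin n)) (Equiv.swap a b)) := by
        rw [JM, map_sum]
      rw [hJM, Finset.mul_sum]
      simp_rw [Finset.sum_mul]
      rw [Finset.sum_comm]
      apply Finset.sum_congr rfl
      intro σ hσ
      apply Finset.sum_congr rfl
      intro a ha
      have hab : a ≠ b := by
        simp only [Finset.mem_filter] at ha
        exact ne_of_lt ha.2
      have hσb : σ b = b := (mem_Gs.1 hσ) b le_rfl
      have hcl : colength (σ * Equiv.swap a b) = colength σ + 1 := colength_mul_swap hab hσb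
      rw [hcl]
      have hexp : m + 1 - (colength σ + 1) = m - colength σ := by omega
      rw [hexp]
      rw [mul_assoc, Polynomial.X_pow_mul, ← mul_assoc, ← map_mul, ← map_mul]

lemma sort_insert_max {n : ℕ} {S : Finset (Fin n)} {b : Fin n}
    (hball : ∀ x ∈ S, x ≤ b) (hb : b ∉ S) :
    (insert b S).sort (· ≤ ·) = S.sort (· ≤ ·) ++ [b] := by
  haveI : IsAntisymm (Fin n) (· ≤ ·) := ⟨fun a b h1 h2 => le_antisymm h1 h2⟩
  have hperm : List.Perm ((insert b S).sort (· ≤ ·)) (S.sort (· ≤ ·) ++ [b]) := by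
    refine ((Finset.sort_perm_toList _ _).trans ?_).trans (List.perm_append_singleton b _).symm
    exact (Finset.toList_insert hb).trans (List.Perm.cons b (Finset.sort_perm_toList _ _).symm)
  refine List.Perm.eq_of_pairwise' (r := (· ≤ ·)) (Finset.pairwise_sort _ _) ?_ hperm
  · rw [List.pairwise_append]
    refine ⟨Finset.pairwise_sort _ _, List.pairwise_singleton _ b, ?_⟩
    intro x hx y hy
    rw [List.mem_singleton] at hy
    subst hy
    exact hball x ((Finset.mem_sort _).1 hx)

lemma firstm_succ {n m : ℕ} (hmn : m < n) :
    firstm n (m + 1) = insert (⟨m, hmn⟩ : Fin n) (firstm n m) := by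
  ext x
  simp only [firstm, Finset.mem_filter, Finset.mem_univ, true_and, Finset.mem_insert]
  constructor
  · intro hx
    by_cases h : x.val = m
    · exact Or.inl (Fin.ext h)
    · exact Or.inr (by omega)
  · rintro (h | h)
    · rw [h]
      exact Nat.lt_succ_self m
    · omega

lemma P1 (n : ℕ) : ∀ m, m ≤ n → ∀ d : ℕ,
    ∑ S ∈ (firstm n m).powersetCard d, ((S.sort (· ≤ ·)).map (JM n)).prod =
      ∑ σ ∈ (Gs n m).filter (fun σ => colength σ = d),
        MonoidAlgebra.of ℂ (Equiv.Perm (Fin n)) σ := by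
  intro m
  induction m with
  | zero =>
    intro _ d
    have h0 : firstm n 0 = ∅ := by
      ext x
      simp [firstm]
    rw [h0, Gs_zero]
    cases d with
    | zero =>
      rw [Finset.powersetCard_zero]
      rw [Finset.sum_singleton, Finset.sort_empty]
      have : Finset.filter (fun σ => colength σ = 0) ({1} : Finset (Equiv.Perm (Fin n))) = {1} := by
        rw [Finset.filter_singleton, if_pos colength_one]
      rw [this, Finset.sum_singleton]
      simp [MonoidAlgebra.of_apply, MonoidAlgebra.one_def]
    | succ e =>
      rw [Finset.powersetCard_eq_empty.2 (by simp), Finset.sum_empty]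
      have : Finset.filter (fun σ => colength σ = e + 1) ({1} : Finset (Equiv.Perm (Fin n))) = ∅ := by
        rw [Finset.filter_singleton, if_neg (by rw [colength_one]; omega)]
      rw [this, Finset.sum_empty]
  | succ m ih =>
    intro hm d
    have hmn : m < n := hm
    set b : Fin n := ⟨m, hmn⟩ with hbdef
    have hb1 : b.val = m := rfl
    have hbnot : b ∉ firstm n m := by simp [firstm, hb1]
    -- core identity specialized
    have hcore := sum_Gs_succ b (fun τ =>
      if colength τ = d then MonoidAlgebra.of ℂ (Equiv.Perm (Fin n)) τ else 0)
    rw [hb1] at hcore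
    rw [← Finset.sum_filter] at hcore
    rw [← Finset.sum_filter] at hcore
    -- rewrite the swap part of hcore
    have hswap : ∑ σ ∈ Gs n m, ∑ a ∈ Finset.univ.filter (· < b),
        (if colength (σ * Equiv.swap a b) = d then
          MonoidAlgebra.of ℂ (Equiv.Perm (Fin n)) (σ * Equiv.swap a b) else 0) =
        ∑ σ ∈ Gs n m, ∑ a ∈ Finset.univ.filter (· < b),
        (if colength σ + 1 = d then
          MonoidAlgebra.of ℂ (Equiv.Perm (Fin n)) (σ * Equiv.swap a b) else 0) := by
      apply Finset.sum_congr rfl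
      intro σ hσ
      apply Finset.sum_congr rfl
      intro a ha
      have hab : a ≠ b := ne_of_lt (by simpa using (Finset.mem_filter.1 ha).2)
      have hσb : σ b = b := (mem_Gs.1 hσ) b le_rfl
      rw [colength_mul_swap hab hσb]
    rw [hswap] at hcore
    cases d with
    | zero =>
      rw [Finset.powersetCard_zero, Finset.sum_singleton, Finset.sort_empty]
      have hz : ∀ σ ∈ Gs n m, ∑ a ∈ Finset.univ.filter (· < b),
          (if colength σ + 1 = 0 then
            MonoidAlgebra.of ℂ (Equiv.Perm (Fin n)) (σ * Equiv.swap a b) else 0) = 0 := by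
        intro σ _
        apply Finset.sum_eq_zero
        intro a _
        rw [if_neg (by omega)]
      rw [Finset.sum_congr rfl hz, Finset.sum_const_zero, add_zero] at hcore
      rw [hcore]
      have := ih (le_of_lt hmn) 0
      rw [Finset.powersetCard_zero, Finset.sum_singleton, Finset.sort_empty] at this
      exact this
    | succ e =>
      -- LHS: split powersetCard over insert
      rw [firstm_succ hmn, Finset.powersetCard_succ_insert hbnot]
      have hdisj : Disjoint ((firstm n m).powersetCard (e + 1))
          (((firstm n m).powersetCard e).image (insert b)) := by
        rw [Finset.disjoint_left]
        intro S hS hS'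
        rw [Finset.mem_powersetCard] at hS
        have hbS : b ∉ S := fun h => hbnot (hS.1 h)
        rw [Finset.mem_image] at hS'
        obtain ⟨T, _, hT⟩ := hS'
        exact hbS (hT ▸ Finset.mem_insert_self b T)
      rw [Finset.sum_union hdisj]
      have himg : ∑ S ∈ ((firstm n m).powersetCard e).image (insert b),
          ((S.sort (· ≤ ·)).map (JM n)).prod =
          ∑ S ∈ (firstm n m).powersetCard e,
            (((S.sort (· ≤ ·)).map (JM n)).prod) * JM n b := by
        rw [Finset.sum_image]
        · apply Finset.sum_congr rfl
          intro S hS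
          rw [Finset.mem_powersetCard] at hS
          have hbS : b ∉ S := fun h => hbnot (hS.1 h)
          have hball : ∀ x ∈ S, x ≤ b := by
            intro x hx
            have := hS.1 hx
            simp only [firstm, Finset.mem_filter, Finset.mem_univ, true_and] at this
            exact le_of_lt (show x < b from this)
          rw [sort_insert_max hball hbS, List.map_append, List.prod_append]
          simp
        · intro S hS T hT hST
          rw [Finset.mem_coe, Finset.mem_powersetCard] at hS hT
          have hbS : b ∉ S := fun h => hbnot (hS.1 h)
          have hbT : b ∉ T := fun h => hbnot (hT.1 h)
          have := congrArg (fun U => Finset.erase U b) hST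
          simpa [Finset.erase_insert, hbS, hbT] using this
      rw [himg, ← Finset.sum_mul, ih (le_of_lt hmn) (e + 1), ih (le_of_lt hmn) e]
      -- RHS via hcore
      have hswap2 : ∑ σ ∈ Gs n m, ∑ a ∈ Finset.univ.filter (· < b),
          (if colength σ + 1 = e + 1 then
            MonoidAlgebra.of ℂ (Equiv.Perm (Fin n)) (σ * Equiv.swap a b) else 0) =
          ∑ σ ∈ (Gs n m).filter (fun σ => colength σ = e),
            ∑ a ∈ Finset.univ.filter (· < b),
              MonoidAlgebra.of ℂ (Equiv.Perm (Fin n)) (σ * Equiv.swap a b) := by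
        rw [Finset.sum_filter]
        apply Finset.sum_congr rfl
        intro σ _
        by_cases h : colength σ = e
        · rw [if_pos h]
          apply Finset.sum_congr rfl
          intro a _
          rw [if_pos (by omega)]
        · rw [if_neg h]
          apply Finset.sum_eq_zero
          intro a _
          rw [if_neg (by omega)]
      rw [hswap2] at hcore
      rw [hcore]
      congr 1
      -- the product with JM equals double sum
      rw [JM, Finset.sum_mul_sum]
      apply Finset.sum_congr rfl
      intro σ _
      apply Finset.sum_congr rfl
      intro a _
      rw [← map_mul]




/-- Jucys' theorem: for every `n ≥ 1` and `d ≥ 0`,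
`e_d(J_1,…,J_n) = Σ_{σ ∈ S_n, ℓ*(σ) = d} σ`; equivalently,
`Π_{b=1}^n (X + J_b) = Σ_{σ ∈ S_n} X^{n − ℓ*(σ)} σ` in `ℂ[S_n][X]`. -/
theorem jucys_theorem (n : ℕ) (hn : 1 ≤ n) :
    (∀ d : ℕ, esymmJM n d =
      ∑ σ ∈ Finset.univ.filter fun σ : Equiv.Perm (Fin n) => colength σ = d,
        MonoidAlgebra.of ℂ (Equiv.Perm (Fin n)) σ) ∧
    (List.ofFn fun b : Fin n => Polynomial.X + Polynomial.C (JM n b)).prod =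
      ∑ σ : Equiv.Perm (Fin n),
        Polynomial.C (MonoidAlgebra.of ℂ (Equiv.Perm (Fin n)) σ) *
          Polynomial.X ^ (n - colength σ) := by
  have hfm : firstm n n = Finset.univ := by
    ext x
    simp [firstm, x.isLt]
  constructor
  · intro d
    have h := P1 n n le_rfl d
    rw [hfm, Gs_top] at h
    rw [esymmJM]
    exact h
  · have h := P2 n n le_rfl
    have htake : (List.ofFn fun b : Fin n => Polynomial.X + Polynomial.C (JM n b)).take n =
        List.ofFn fun b : Fin n => Polynomial.X + Polynomial.C (JM n b) :=
      List.take_of_length_le (by rw [List.length_ofFn])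
    rw [htake, Gs_top] at h
    exact h

end JucysProof
end

section
/- Let n ≥ 1, let λ = (λ_1,…,λ_ℓ) be a partition of d, and let h, g ∈ S_n. Then the total number of sequences of transpositions (τ_1,…,τ_d) in S_n with signature λ satisfying τ_d ⋯ τ_1 h = g equals (d! / (λ_1! ⋯ λ_ℓ!)) times the number of weakly monotone such sequences, i.e., the count of signature-λ paths with a given endpoint is d!/Π_i λ_i! times the count of weakly monotone ones. -/
/-- For a transposition `τ = (a b)` with `a < b`, the "second element" `b`,
realized as the largest point moved by `τ`. -/
def bval {n : ℕ} (τ : Equiv.Perm (Fin n)) : ℕ :=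
  τ.support.sup fun x => (x : ℕ)

/-- The signature of a sequence of transpositions `(τ_1,…,τ_d)`: the multiset recording
the multiplicities with which the distinct values among the second elements `b_1,…,b_d`
occur. -/
def signature {n d : ℕ} (τ : Fin d → Equiv.Perm (Fin n)) : Multiset ℕ :=
  let B : Multiset ℕ := Finset.univ.val.map fun m => bval (τ m)
  B.toFinset.val.map fun b => B.count b

namespace PathCount

variable {n d : ℕ}

/-! ### Basic lemmas about `bval` -/

lemma bval_swap {a b : Fin n} (hab : a ≠ b) : bval (Equiv.swap a b) = max (a:ℕ) (b:ℕ) := by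
  unfold bval
  rw [Equiv.Perm.support_swap hab]
  simp [Finset.sup_insert, max_comm]

lemma isSwap_mul_self {s : Equiv.Perm (Fin n)} (hs : s.IsSwap) : s * s = 1 := by
  obtain ⟨a, b, hab, rfl⟩ := hs; exact Equiv.swap_mul_self a b

lemma isSwap_inv_eq {s : Equiv.Perm (Fin n)} (hs : s.IsSwap) : s⁻¹ = s := by
  obtain ⟨a, b, hab, rfl⟩ := hs; exact Equiv.swap_inv a b

lemma bval_lt {s : Equiv.Perm (Fin n)} (hs : s.IsSwap) : bval s < n := by
  obtain ⟨a, b, hab, rfl⟩ := hs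
  rw [bval_swap hab]
  exact max_lt a.isLt b.isLt

lemma isSwap_conj {s t : Equiv.Perm (Fin n)} (hs : s.IsSwap) (ht : t.IsSwap) :
    (t * s * t).IsSwap := by
  obtain ⟨a, b, hab, rfl⟩ := hs
  refine ⟨t a, t b, fun hc => hab (t.injective hc), ?_⟩
  rw [Equiv.swap_apply_apply, isSwap_inv_eq ht]

lemma bval_conj_aux {a b a' b' : Fin n} (hab : a ≠ b) (ha'b' : a' ≠ b')
    (h1 : (a:ℕ) ≤ b) (h2 : bval (Equiv.swap a' b') < (b:ℕ)) :
    bval (Equiv.swap a' b' * Equiv.swap a b * Equiv.swap a' b') = (b:ℕ) := by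
  rw [bval_swap ha'b'] at h2
  set t := Equiv.swap a' b' with ht
  have hinv : t⁻¹ = t := Equiv.swap_inv a' b'
  have key : t * Equiv.swap a b * t = Equiv.swap (t a) (t b) := by
    rw [Equiv.swap_apply_apply, hinv]
  rw [key, bval_swap (fun hc => hab (t.injective hc))]
  have htb : t b = b := by
    apply Equiv.swap_apply_of_ne_of_ne
    · exact fun hc => absurd ((congrArg (Fin.val) hc) ▸ le_max_left (a':ℕ) b') (not_le.mpr h2)
    · exact fun hc => absurd ((congrArg (Fin.val) hc) ▸ le_max_right (a':ℕ) b') (not_le.mpr h2)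
  have hta : (t a : ℕ) ≤ b := by
    by_cases h : a = a'
    · rw [ht, h, Equiv.swap_apply_left]
      exact le_of_lt (lt_of_le_of_lt (le_max_right (a':ℕ) b') h2)
    by_cases h' : a = b'
    · rw [ht, h', Equiv.swap_apply_right]
      exact le_of_lt (lt_of_le_of_lt (le_max_left (a':ℕ) b') h2)
    · rw [ht, Equiv.swap_apply_of_ne_of_ne h h']
      exact h1
  rw [htb]
  exact max_eq_right hta

lemma bval_conj {s t : Equiv.Perm (Fin n)} (hs : s.IsSwap) (ht : t.IsSwap)
    (hlt : bval t < bval s) : bval (t * s * t) = bval s := by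
  obtain ⟨a, b, hab, rfl⟩ := hs
  obtain ⟨a', b', ha'b', rfl⟩ := ht
  rw [bval_swap hab] at hlt ⊢
  rcases le_total (a:ℕ) (b:ℕ) with h1 | h1
  · rw [max_eq_right h1] at hlt ⊢
    exact bval_conj_aux hab ha'b' h1 hlt
  · rw [max_eq_left h1] at hlt ⊢
    rw [Equiv.swap_comm a b]
    exact bval_conj_aux (Ne.symm hab) ha'b' h1 hlt

/-! ### The commutation move `phi` -/

/-- the adjacent-swap move on a pair of transpositions -/
noncomputable def phi (s t : Equiv.Perm (Fin n)) :
    Equiv.Perm (Fin n) × Equiv.Perm (Fin n) :=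
  if bval s < bval t then (s * t * s, s)
  else if bval t < bval s then (t, t * s * t)
  else (s, t)

variable {s t : Equiv.Perm (Fin n)} (hs : s.IsSwap) (ht : t.IsSwap)

include hs ht

lemma phi_isSwap₁ : (phi s t).1.IsSwap := by
  unfold phi; split_ifs <;> first | exact isSwap_conj ht hs | exact ht | exact hs

lemma phi_isSwap₂ : (phi s t).2.IsSwap := by
  unfold phi; split_ifs <;> first | exact isSwap_conj hs ht | exact ht | exact hs

lemma phi_bval₁ : bval (phi s t).1 = bval t := by
  unfold phi; split_ifs with h1 h2
  · exact bval_conj ht hs h1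
  · rfl
  · show bval s = bval t; omega

lemma phi_bval₂ : bval (phi s t).2 = bval s := by
  unfold phi; split_ifs with h1 h2
  · rfl
  · exact bval_conj hs ht h2
  · show bval t = bval s; omega

lemma phi_prod : (phi s t).2 * (phi s t).1 = t * s := by
  unfold phi; split_ifs with h1 h2
  · show s * (s * t * s) = t * s
    rw [← mul_assoc, ← mul_assoc, isSwap_mul_self hs, one_mul]
  · show (t * s * t) * t = t * s
    rw [mul_assoc, isSwap_mul_self ht, mul_one]
  · rfl

lemma phi_phi : phi (phi s t).1 (phi s t).2 = (s, t) := by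
  rcases lt_trichotomy (bval s) (bval t) with h | h | h
  · have h1 : phi s t = (s * t * s, s) := by simp [phi, h]
    have hb : bval (s * t * s) = bval t := bval_conj ht hs h
    rw [h1]
    show phi (s * t * s) s = (s, t)
    rw [phi, if_neg (by omega), if_pos (by omega)]
    refine Prod.ext rfl ?_
    show s * (s * t * s) * s = t
    rw [← mul_assoc, ← mul_assoc, isSwap_mul_self hs, one_mul, mul_assoc,
      isSwap_mul_self hs, mul_one]
  · have h1 : phi s t = (s, t) := by simp [phi, h]
    rw [h1]
    show phi s t = (s, t)
    exact h1
  · have h1 : phi s t = (t, t * s * t) := by simp [phi, h, asymm h]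
    have hb : bval (t * s * t) = bval s := bval_conj hs ht h
    rw [h1]
    show phi t (t * s * t) = (s, t)
    rw [phi, if_pos (by omega)]
    refine Prod.ext ?_ rfl
    show t * (t * s * t) * t = s
    rw [← mul_assoc, ← mul_assoc, isSwap_mul_self ht, one_mul, mul_assoc,
      isSwap_mul_self ht, mul_one]

omit hs ht

/-! ### Lists of transpositions with a prescribed word of `bval`s -/

def SetS (c : Equiv.Perm (Fin n)) (w : List ℕ) : Type :=
  {l : List (Equiv.Perm (Fin n)) // (∀ x ∈ l, x.IsSwap) ∧ l.reverse.prod = c ∧ l.map bval = w}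

/-- peel off the first transposition -/
def consEquiv (c : Equiv.Perm (Fin n)) (x : ℕ) (w : List ℕ) :
    SetS c (x :: w) ≃ (t : {t : Equiv.Perm (Fin n) // t.IsSwap ∧ bval t = x}) ×
      SetS (c * t.1⁻¹) w where
  toFun := fun p => match p with
    | ⟨[], hp⟩ => absurd hp.2.2 (by simp)
    | ⟨t :: l, hp⟩ =>
      ⟨⟨t, hp.1 t (by simp), by have := hp.2.2; simp at this; exact this.1⟩,
        ⟨l, fun y hy => hp.1 y (by simp [hy]),
          by
            have := hp.2.1; simp at this
            exact eq_mul_inv_of_mul_eq this,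
          by have := hp.2.2; simp at this; exact this.2⟩⟩
  invFun := fun q => match q with
    | ⟨⟨t, ht⟩, ⟨l, hl⟩⟩ =>
      ⟨t :: l, by
        refine ⟨?_, ?_, ?_⟩
        · intro y hy
          rcases List.mem_cons.mp hy with rfl | hy
          · exact ht.1
          · exact hl.1 y hy
        · simp [hl.2.1]
        · simp [ht.2, hl.2.2]⟩
  left_inv := fun p => match p with
    | ⟨[], hp⟩ => absurd hp.2.2 (by simp)
    | ⟨t :: l, hp⟩ => rfl
  right_inv := fun q => match q with
    | ⟨⟨t, ht⟩, ⟨l, hl⟩⟩ => rfl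

/-- the swap move on the first two transpositions -/
noncomputable def swapFun (c : Equiv.Perm (Fin n)) (a b : ℕ) (w : List ℕ) :
    SetS c (a :: b :: w) → SetS c (b :: a :: w) :=
  fun p => match p with
  | ⟨[], hp⟩ => absurd hp.2.2 (by simp)
  | ⟨[s], hp⟩ => absurd hp.2.2 (by simp)
  | ⟨s :: t :: l, hp⟩ =>
    ⟨(phi s t).1 :: (phi s t).2 :: l, by
      have hs : s.IsSwap := hp.1 s (by simp)
      have ht : t.IsSwap := hp.1 t (by simp)
      have hmap := hp.2.2; simp at hmap
      refine ⟨?_, ?_, ?_⟩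
      · intro y hy
        rcases List.mem_cons.mp hy with rfl | hy
        · exact phi_isSwap₁ hs ht
        rcases List.mem_cons.mp hy with rfl | hy
        · exact phi_isSwap₂ hs ht
        · exact hp.1 y (by simp [hy])
      · have hprod := hp.2.1; simp at hprod ⊢
        rw [phi_prod hs ht]
        exact hprod
      · simp [phi_bval₁ hs ht, phi_bval₂ hs ht, hmap.1, hmap.2.1, hmap.2.2]⟩

lemma swapFun_swapFun (c : Equiv.Perm (Fin n)) (a b : ℕ) (w : List ℕ)
    (p : SetS c (a :: b :: w)) : swapFun c b a w (swapFun c a b w p) = p := by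
  obtain ⟨l, hp⟩ := p
  match l, hp with
  | [], hp => exact absurd hp.2.2 (by simp)
  | [s], hp => exact absurd hp.2.2 (by simp)
  | s :: t :: l, hp =>
    have hs : s.IsSwap := hp.1 s (by simp)
    have ht : t.IsSwap := hp.1 t (by simp)
    apply Subtype.ext
    show (phi (phi s t).1 (phi s t).2).1 :: (phi (phi s t).1 (phi s t).2).2 :: l
        = s :: t :: l
    rw [phi_phi hs ht]

theorem setS_equiv_of_perm {w w' : List ℕ} (hp : w.Perm w') :
    ∀ c : Equiv.Perm (Fin n), Nonempty (SetS c w ≃ SetS c w') := by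
  induction hp with
  | nil => exact fun c => ⟨Equiv.refl _⟩
  | cons x p ih =>
    intro c
    exact ⟨(consEquiv c x _).trans
      ((Equiv.sigmaCongrRight fun (t : {t : Equiv.Perm (Fin n) // t.IsSwap ∧ bval t = x}) =>
        (ih (c * (↑t)⁻¹)).some).trans (consEquiv c x _).symm)⟩
  | swap x y l =>
    intro c
    exact ⟨⟨swapFun c y x l, swapFun c x y l, swapFun_swapFun c y x l,
      swapFun_swapFun c x y l⟩⟩
  | trans _ _ ih1 ih2 => exact fun c => ⟨((ih1 c).some.trans (ih2 c).some)⟩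

/-! ### Words, contents, signatures -/

def msig (B : Multiset ℕ) : Multiset ℕ := B.toFinset.val.map fun b => B.count b

def word (f : Fin d → Fin n) : List ℕ := List.ofFn fun m => ((f m : ℕ))

def wcontent (f : Fin d → Fin n) : Multiset (Fin n) := ↑(List.ofFn f)

noncomputable def msort (f : Fin d → Fin n) : Fin d → Fin n := f ∘ Tuple.sort f

lemma univ_val_map {α : Type*} (g : Fin d → α) :
    (Finset.univ.val.map g : Multiset α) = ↑(List.ofFn g) := by
  simp [List.ofFn_eq_map, Fin.univ_def]

lemma signature_eq (τ : Fin d → Equiv.Perm (Fin n)) :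
    signature τ = msig ↑((List.ofFn τ).map bval) := by
  show msig (Finset.univ.val.map fun m => bval (τ m)) = _
  rw [univ_val_map (fun m => bval (τ m))]
  congr 1
  rw [List.map_ofFn]
  rfl

lemma word_eq (f : Fin d → Fin n) : word f = (List.ofFn f).map Fin.val := by
  rw [List.map_ofFn]; rfl

lemma word_coe (f : Fin d → Fin n) :
    (↑(word f) : Multiset ℕ) = (wcontent f).map Fin.val := by
  rw [word_eq]
  rfl

lemma mono_eq {f f' : Fin d → Fin n} (hf : Monotone f) (hf' : Monotone f')
    (hc : wcontent f = wcontent f') : f = f' :=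
  List.ofFn_injective (List.Perm.eq_of_sortedLE hf.sortedLE_ofFn hf'.sortedLE_ofFn
    (Multiset.coe_eq_coe.mp hc))

lemma monotone_msort (f : Fin d → Fin n) : Monotone (msort f) := Tuple.monotone_sort f

lemma wcontent_comp_perm (f : Fin d → Fin n) (σ : Equiv.Perm (Fin d)) :
    wcontent (f ∘ σ) = wcontent f :=
  Multiset.coe_eq_coe.mpr (σ.ofFn_comp_perm f)

lemma wcontent_msort (f : Fin d → Fin n) : wcontent (msort f) = wcontent f :=
  wcontent_comp_perm f _

lemma msort_of_monotone {f : Fin d → Fin n} (hf : Monotone f) : msort f = f := by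
  unfold msort
  rw [Tuple.sort_eq_refl_iff_monotone.mpr hf]
  simp

lemma msort_eq_of_wcontent {f f' : Fin d → Fin n} (hc : wcontent f = wcontent f') :
    msort f = msort f' :=
  mono_eq (monotone_msort f) (monotone_msort f')
    ((wcontent_msort f).trans (hc.trans (wcontent_msort f').symm))

/-! ### Orbit and stabilizer counts -/

lemma orbit_count (f₀ : Fin d → Fin n) :
    Nat.card {f : Fin d → Fin n // wcontent f = wcontent f₀} *
      Nat.card {σ : Equiv.Perm (Fin d) // f₀ ∘ σ = f₀} = Nat.factorial d := by
  classical
  set Y := {f : Fin d → Fin n // wcontent f = wcontent f₀}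
  set Φ : Equiv.Perm (Fin d) → Y := fun σ => ⟨f₀ ∘ σ, wcontent_comp_perm f₀ σ⟩ with hΦ
  have sect : ∀ y : Y, ∃ σ, Φ σ = y := by
    rintro ⟨f, hf⟩
    have h1 : msort f = msort f₀ := msort_eq_of_wcontent hf
    refine ⟨(Tuple.sort f).symm.trans (Tuple.sort f₀), ?_⟩
    apply Subtype.ext
    show f₀ ∘ _ = f
    funext m
    show f₀ (Tuple.sort f₀ ((Tuple.sort f).symm m)) = f m
    have := congrFun h1 ((Tuple.sort f).symm m)
    unfold msort at this
    simp only [Function.comp_apply] at this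
    rw [← this]
    show (f ∘ Tuple.sort f) ((Tuple.sort f).symm m) = f m
    simp
  have fib : ∀ y : Y, Nat.card {σ // Φ σ = y} =
      Nat.card {σ : Equiv.Perm (Fin d) // f₀ ∘ σ = f₀} := by
    intro y
    obtain ⟨σy, hσy⟩ := sect y
    refine Nat.card_congr (Equiv.subtypeEquiv (Equiv.mulRight σy⁻¹) fun σ => ?_)
    have hy : f₀ ∘ σy = y.1 := congrArg Subtype.val hσy
    constructor
    · intro hΦσ
      have hσ : f₀ ∘ σ = y.1 := congrArg Subtype.val hΦσ
      funext m
      show f₀ (σ (σy⁻¹ m)) = f₀ m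
      rw [show f₀ (σ (σy⁻¹ m)) = (f₀ ∘ σ) (σy⁻¹ m) from rfl, hσ, ← hy]
      show f₀ (σy (σy⁻¹ m)) = f₀ m
      simp
    · intro hst
      apply Subtype.ext
      show f₀ ∘ σ = y.1
      funext m
      rw [← hy]
      show f₀ (σ m) = f₀ (σy m)
      have := congrFun hst (σy m)
      simpa using this
  have key : Nat.card (Equiv.Perm (Fin d)) =
      Nat.card Y * Nat.card {σ : Equiv.Perm (Fin d) // f₀ ∘ σ = f₀} := by
    rw [← Nat.card_congr (Equiv.sigmaFiberEquiv Φ)]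
    have : ∀ y : Y, Fintype {σ // Φ σ = y} := fun y => Fintype.ofFinite _
    rw [Nat.card_eq_fintype_card]
    rw [Fintype.card_sigma]
    have : ∀ y : Y, Fintype.card {σ // Φ σ = y} =
        Nat.card {σ : Equiv.Perm (Fin d) // f₀ ∘ σ = f₀} := fun y => by
      rw [← Nat.card_eq_fintype_card]; exact fib y
    rw [Finset.sum_congr rfl fun y _ => this y, Finset.sum_const, Finset.card_univ,
      smul_eq_mul, ← Nat.card_eq_fintype_card]
  rw [← key, Nat.card_eq_fintype_card, Fintype.card_perm, Fintype.card_fin]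

lemma stab_card (f₀ : Fin d → Fin n) :
    Nat.card {σ : Equiv.Perm (Fin d) // f₀ ∘ σ = f₀} =
      ∏ i : Fin n, (Nat.card {m : Fin d // f₀ m = i}).factorial := by
  classical
  rw [Nat.card_eq_fintype_card, DomMulAct.stabilizer_card]
  exact Finset.prod_congr rfl fun i _ => by rw [Nat.card_eq_fintype_card]

lemma count_word (f₀ : Fin d → Fin n) (i : Fin n) :
    Multiset.count (i : ℕ) ↑(word f₀) = Nat.card {m : Fin d // f₀ m = i} := by
  classical
  rw [show (↑(word f₀) : Multiset ℕ) = Finset.univ.val.map (fun m => ((f₀ m : ℕ))) from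
    (univ_val_map _).symm]
  rw [Multiset.count_map]
  rw [Nat.card_eq_fintype_card, Fintype.card_subtype]
  rw [← Finset.filter_val]
  show (Finset.filter (fun a => (i:ℕ) = ↑(f₀ a)) Finset.univ).card = _
  congr 1
  apply Finset.filter_congr
  intro m _
  simp [Fin.ext_iff, eq_comm]

lemma prod_fact (f₀ : Fin d → Fin n) :
    ((msig ↑(word f₀)).map Nat.factorial).prod
      = ∏ i : Fin n, (Nat.card {m : Fin d // f₀ m = i}).factorial := by
  classical
  have h1 : ((msig ↑(word f₀)).map Nat.factorial).prod
      = ∏ b ∈ (↑(word f₀) : Multiset ℕ).toFinset,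
          (Multiset.count b (↑(word f₀) : Multiset ℕ)).factorial := by
    unfold msig
    rw [Multiset.map_map]
    rfl
  have hmemB : ∀ b ∈ (↑(word f₀) : Multiset ℕ), ∃ i : Fin n, (i : ℕ) = b := by
    intro b hb
    rw [Multiset.mem_coe] at hb
    unfold word at hb
    obtain ⟨m, hm⟩ := List.mem_ofFn.mp hb
    exact ⟨f₀ m, hm⟩
  have h2 : ∏ i : Fin n, (Multiset.count (i : ℕ) (↑(word f₀) : Multiset ℕ)).factorial
      = ∏ i ∈ Finset.univ.filter
          (fun i : Fin n => (i : ℕ) ∈ (↑(word f₀) : Multiset ℕ).toFinset),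
          (Multiset.count (i : ℕ) (↑(word f₀) : Multiset ℕ)).factorial := by
    refine (Finset.prod_subset (Finset.filter_subset _ _) ?_).symm
    intro i _ hi
    rw [Finset.mem_filter] at hi
    have : (i : ℕ) ∉ (↑(word f₀) : Multiset ℕ).toFinset :=
      fun hc => hi ⟨Finset.mem_univ i, hc⟩
    rw [Multiset.mem_toFinset] at this
    rw [Multiset.count_eq_zero_of_notMem this]
    rfl
  have h3 : (↑(word f₀) : Multiset ℕ).toFinset
      = (Finset.univ.filter
          (fun i : Fin n => (i : ℕ) ∈ (↑(word f₀) : Multiset ℕ).toFinset)).image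
          Fin.val := by
    ext b
    constructor
    · intro hb
      obtain ⟨i, hi⟩ := hmemB b (Multiset.mem_toFinset.mp hb)
      refine Finset.mem_image.mpr ⟨i, ?_, hi⟩
      rw [Finset.mem_filter]
      exact ⟨Finset.mem_univ i, hi ▸ hb⟩
    · intro hb
      obtain ⟨i, hi, rfl⟩ := Finset.mem_image.mp hb
      rw [Finset.mem_filter] at hi
      exact hi.2
  rw [h1, h3, Finset.prod_image (fun i _ j _ hij => Fin.ext hij)]
  have h4 : ∀ i : Fin n, Nat.card {m : Fin d // f₀ m = i}
      = Multiset.count (i : ℕ) (↑(word f₀) : Multiset ℕ) :=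
    fun i => (count_word f₀ i).symm
  simp only [h4]
  exact h2.symm

/-! ### Sequences with prescribed `bval` function -/

def TSet (c : Equiv.Perm (Fin n)) (f : Fin d → Fin n) : Type :=
  {τ : Fin d → Equiv.Perm (Fin n) //
    (∀ m, (τ m).IsSwap) ∧ (List.ofFn τ).reverse.prod = c ∧ ∀ m, bval (τ m) = (f m : ℕ)}

instance (c : Equiv.Perm (Fin n)) (f : Fin d → Fin n) : Finite (TSet c f) :=
  Subtype.finite

def TEquiv (c : Equiv.Perm (Fin n)) (f : Fin d → Fin n) : TSet c f ≃ SetS c (word f) where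
  toFun := fun p =>
    ⟨List.ofFn p.1, by
      obtain ⟨τ, h1, h2, h3⟩ := p
      refine ⟨?_, h2, ?_⟩
      · intro x hx
        obtain ⟨m, rfl⟩ := List.mem_ofFn.mp hx
        exact h1 m
      · rw [List.map_ofFn]
        unfold word
        congr 1
        funext m
        exact h3 m⟩
  invFun := fun q =>
    ⟨fun m => q.1.get ⟨(m : ℕ), by
        rw [show q.1.length = d by
          have := congrArg List.length q.2.2.2
          simpa [word] using this]
        exact m.isLt⟩, by
      obtain ⟨l, h1, h2, h3⟩ := q
      have hlen : l.length = d := by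
        have := congrArg List.length h3
        simpa [word] using this
      have hofn : List.ofFn (fun m : Fin d => l.get ⟨(m : ℕ), by rw [hlen]; exact m.isLt⟩)
          = l := by
        apply List.ext_get
        · simp [hlen]
        · intro i hi1 hi2
          simp
      refine ⟨fun m => by exact h1 _ (List.get_mem l _), by rw [hofn]; exact h2, fun m => ?_⟩
      have h3' : (List.ofFn (fun m : Fin d => l.get ⟨(m : ℕ), by rw [hlen]; exact m.isLt⟩)).map bval
          = word f := by rw [hofn]; exact h3
      rw [List.map_ofFn, word] at h3'
      have := List.ofFn_injective h3'
      exact congrFun this m⟩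
  left_inv := by
    rintro ⟨τ, hτ⟩
    apply Subtype.ext
    funext m
    simp
  right_inv := by
    rintro ⟨l, hl⟩
    apply Subtype.ext
    apply List.ext_get
    · have := congrArg List.length hl.2.2
      simp only [List.length_ofFn]
      simpa [word] using this.symm
    · intro i hi1 hi2
      simp

lemma card_T_eq {c : Equiv.Perm (Fin n)} {f f' : Fin d → Fin n}
    (hc : wcontent f = wcontent f') :
    Nat.card (TSet c f) = Nat.card (TSet c f') := by
  have hperm : (word f).Perm (word f') := by
    rw [word_eq, word_eq]
    exact (Multiset.coe_eq_coe.mp hc).map Fin.val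
  obtain ⟨e⟩ := setS_equiv_of_perm hperm c
  exact Nat.card_congr ((TEquiv c f).trans (e.trans (TEquiv c f').symm))

lemma card_sigma' {ι : Type*} [Fintype ι] (β : ι → Type*) [∀ i, Finite (β i)] :
    Nat.card (Sigma β) = ∑ i, Nat.card (β i) := by
  have : ∀ i, Fintype (β i) := fun i => Fintype.ofFinite _
  simp only [Nat.card_eq_fintype_card]
  exact Fintype.card_sigma

lemma monotone_coe_iff {f : Fin d → Fin n} :
    Monotone (fun m => (f m : ℕ)) ↔ Monotone f := by
  constructor
  · intro hmono a b hab
    exact Fin.le_def.mpr (hmono hab)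
  · intro hmono a b hab
    exact Fin.le_def.mp (hmono hab)


lemma word_of {τ : Fin d → Equiv.Perm (Fin n)} {f : Fin d → Fin n}
    (hbf : ∀ m, bval (τ m) = (f m : ℕ)) : (List.ofFn τ).map bval = word f := by
  rw [List.map_ofFn]
  unfold word
  congr 1
  funext m
  exact hbf m

def sigEquiv (c : Equiv.Perm (Fin n)) (M : Multiset ℕ) (Q : (Fin d → ℕ) → Prop) :
    {τ : Fin d → Equiv.Perm (Fin n) //
        (∀ m, (τ m).IsSwap) ∧ Q (fun m => bval (τ m)) ∧ signature τ = M ∧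
        (List.ofFn τ).reverse.prod = c} ≃
      Σ f : {f : Fin d → Fin n // msig ↑(word f) = M ∧ Q (fun m => ((f m : ℕ)))},
        TSet c f.1 where
  toFun := fun p =>
    ⟨⟨fun m => ⟨bval (p.1 m), bval_lt (p.2.1 m)⟩, by
        have hw : (List.ofFn p.1).map bval
            = word (fun m => (⟨bval (p.1 m), bval_lt (p.2.1 m)⟩ : Fin n)) :=
          word_of fun m => rfl
        rw [← hw, ← signature_eq]
        exact p.2.2.2.1, p.2.2.1⟩,
      ⟨p.1, p.2.1, p.2.2.2.2, fun m => rfl⟩⟩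
  invFun := fun q =>
    ⟨q.2.1, q.2.2.1, by
        have : (fun m => bval (q.2.1 m)) = fun m => ((q.1.1 m : ℕ)) :=
          funext fun m => q.2.2.2.2 m
        rw [this]
        exact q.1.2.2, by
        rw [signature_eq, word_of (fun m => q.2.2.2.2 m)]
        exact q.1.2.1, q.2.2.2.1⟩
  left_inv := fun p => Subtype.ext rfl
  right_inv := by
    have aux : ∀ (y y' : {f : Fin d → Fin n // msig ↑(word f) = M ∧ Q (fun m => ((f m : ℕ)))})
        (_ : y.1 = y'.1) (a : TSet c y.1) (b : TSet c y'.1), a.1 = b.1 →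
        (⟨y, a⟩ : Σ f : {f : Fin d → Fin n // msig ↑(word f) = M ∧
          Q (fun m => ((f m : ℕ)))}, TSet c f.1) = ⟨y', b⟩ := by
      rintro ⟨y, hy⟩ ⟨y', hy'⟩ hyy
      dsimp at hyy
      subst hyy
      rintro ⟨a, ha⟩ ⟨b, hb⟩ hab
      dsimp at hab
      subst hab
      rfl
    rintro ⟨⟨f, hf⟩, τ, hτ⟩
    exact aux _ _ (funext fun m => Fin.ext (hτ.2.2 m)) _ _ rfl

lemma card_decomp (c : Equiv.Perm (Fin n)) (M : Multiset ℕ) (Q : (Fin d → ℕ) → Prop)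
    [DecidablePred (fun f : Fin d → Fin n => msig ↑(word f) = M ∧ Q (fun m => ((f m : ℕ))))] :
    Nat.card {τ : Fin d → Equiv.Perm (Fin n) //
        (∀ m, (τ m).IsSwap) ∧ Q (fun m => bval (τ m)) ∧ signature τ = M ∧
        (List.ofFn τ).reverse.prod = c}
      = ∑ f ∈ Finset.univ.filter
          (fun f : Fin d → Fin n => msig ↑(word f) = M ∧ Q (fun m => ((f m : ℕ)))),
          Nat.card (TSet c f) := by
  classical
  rw [Nat.card_congr (sigEquiv c M Q), card_sigma']
  exact (Finset.sum_subtype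
    (Finset.univ.filter
      (fun f : Fin d → Fin n => msig ↑(word f) = M ∧ Q (fun m => ((f m : ℕ)))))
    (fun x => ⟨fun hx => (Finset.mem_filter.mp hx).2,
      fun hx => Finset.mem_filter.mpr ⟨Finset.mem_univ x, hx⟩⟩)
    (fun f => Nat.card (TSet c f))).symm

lemma msig_congr {f f' : Fin d → Fin n} (hc : wcontent f = wcontent f') :
    msig ↑(word f) = msig ↑(word f') := by
  rw [word_coe, word_coe, hc]

lemma main_count (c : Equiv.Perm (Fin n)) (M : Multiset ℕ)
    [DecidablePred (fun f : Fin d → Fin n => msig ↑(word f) = M ∧ True)]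
    [DecidablePred (fun f : Fin d → Fin n =>
      msig ↑(word f) = M ∧ Monotone (fun m => ((f m : ℕ))))] :
    (M.map Nat.factorial).prod *
        ∑ f ∈ Finset.univ.filter (fun f : Fin d → Fin n => msig ↑(word f) = M ∧ True),
          Nat.card (TSet c f)
      = Nat.factorial d *
        ∑ f ∈ Finset.univ.filter (fun f : Fin d → Fin n =>
            msig ↑(word f) = M ∧ Monotone (fun m => ((f m : ℕ)))),
          Nat.card (TSet c f) := by
  classical
  set v : (Fin d → Fin n) → ℕ := fun f => Nat.card (TSet c f) with hv
  set sTot := Finset.univ.filter (fun f : Fin d → Fin n => msig ↑(word f) = M ∧ True)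
    with hsTot
  set sMono := Finset.univ.filter (fun f : Fin d → Fin n =>
    msig ↑(word f) = M ∧ Monotone (fun m => ((f m : ℕ)))) with hsMono
  have step1 : ∑ f ∈ sTot, v f = ∑ f ∈ sTot, v (msort f) :=
    Finset.sum_congr rfl fun f _ => (card_T_eq (wcontent_msort f)).symm
  have step2 : ∑ f ∈ sTot, v (msort f)
      = ∑ f₀ ∈ sTot.image msort, (sTot.filter fun f => msort f = f₀).card • v f₀ :=
    Finset.sum_comp v msort
  have step3 : sTot.image msort = sMono := by
    ext f₀
    constructor
    · intro hf₀
      obtain ⟨f, hf, rfl⟩ := Finset.mem_image.mp hf₀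
      rw [hsTot, Finset.mem_filter] at hf
      rw [hsMono, Finset.mem_filter]
      refine ⟨Finset.mem_univ _, ?_, monotone_coe_iff.mpr (monotone_msort f)⟩
      rw [msig_congr (wcontent_msort f)]
      exact hf.2.1
    · intro hf₀
      rw [hsMono, Finset.mem_filter] at hf₀
      refine Finset.mem_image.mpr ⟨f₀, ?_, msort_of_monotone (monotone_coe_iff.mp hf₀.2.2)⟩
      rw [hsTot, Finset.mem_filter]
      exact ⟨Finset.mem_univ _, hf₀.2.1, trivial⟩
  have step4 : ∀ f₀ ∈ sMono,
      (sTot.filter fun f => msort f = f₀).card * (M.map Nat.factorial).prod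
        = Nat.factorial d := by
    intro f₀ hf₀
    rw [hsMono, Finset.mem_filter] at hf₀
    have hfil : (sTot.filter fun f => msort f = f₀)
        = Finset.univ.filter (fun f => wcontent f = wcontent f₀) := by
      ext f
      simp only [hsTot, Finset.mem_filter]
      constructor
      · rintro ⟨⟨-, -⟩, hm⟩
        exact ⟨Finset.mem_univ _, by rw [← hm, wcontent_msort]⟩
      · rintro ⟨-, hwc⟩
        refine ⟨⟨Finset.mem_univ _, ?_, trivial⟩, ?_⟩
        · rw [msig_congr hwc]
          exact hf₀.2.1
        · rw [msort_eq_of_wcontent hwc]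
          exact msort_of_monotone (monotone_coe_iff.mp hf₀.2.2)
    have hcard : (sTot.filter fun f => msort f = f₀).card
        = Nat.card {f : Fin d → Fin n // wcontent f = wcontent f₀} := by
      rw [hfil, Nat.card_eq_fintype_card, Fintype.card_subtype]
    have hstab : Nat.card {σ : Equiv.Perm (Fin d) // f₀ ∘ σ = f₀}
        = (M.map Nat.factorial).prod := by
      rw [stab_card, ← prod_fact, hf₀.2.1]
    rw [hcard, ← hstab]
    exact orbit_count f₀
  calc (M.map Nat.factorial).prod * ∑ f ∈ sTot, v f
      = ∑ f₀ ∈ sMono, (M.map Nat.factorial).prod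
          * ((sTot.filter fun f => msort f = f₀).card * v f₀) := by
        rw [step1, step2, step3, Finset.mul_sum]
        exact Finset.sum_congr rfl fun f₀ _ => by rw [smul_eq_mul]
    _ = ∑ f₀ ∈ sMono, Nat.factorial d * v f₀ := by
        refine Finset.sum_congr rfl fun f₀ hf₀ => ?_
        rw [← mul_assoc, mul_comm ((M.map Nat.factorial).prod), step4 f₀ hf₀]
    _ = Nat.factorial d * ∑ f₀ ∈ sMono, v f₀ := (Finset.mul_sum _ _ _).symm

end PathCount

/-- for `n ≥ 1`, a partition `λ = (λ_1,…,λ_ℓ)` of `d` and `h, g ∈ S_n`, the total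
number of sequences of transpositions `(τ_1,…,τ_d)` of signature `λ` with `τ_d ⋯ τ_1 h = g`
equals `d!/(λ_1! ⋯ λ_ℓ!)` times the number of weakly monotone such sequences. -/
theorem path_count_eq_multinomial_mul_monotone_count (n : ℕ) (hn : 1 ≤ n) (d : ℕ)
    (lam : Nat.Partition d) (h g : Equiv.Perm (Fin n)) :
    (Nat.card {τ : Fin d → Equiv.Perm (Fin n) //
        (∀ m, (τ m).IsSwap) ∧
        signature τ = lam.parts ∧
        (List.ofFn τ).reverse.prod * h = g} : ℚ) =
      ((Nat.factorial d : ℚ) / ((lam.parts.map Nat.factorial).prod : ℚ)) *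
        (Nat.card {τ : Fin d → Equiv.Perm (Fin n) //
          (∀ m, (τ m).IsSwap) ∧
          Monotone (fun m => bval (τ m)) ∧
          signature τ = lam.parts ∧
          (List.ofFn τ).reverse.prod * h = g} : ℚ) := by
  classical
  open PathCount in
  set c : Equiv.Perm (Fin n) := g * h⁻¹ with hc
  have hprod_iff : ∀ τ : Fin d → Equiv.Perm (Fin n),
      (List.ofFn τ).reverse.prod = c ↔ (List.ofFn τ).reverse.prod * h = g :=
    fun τ => eq_mul_inv_iff_mul_eq
  have etot : Nat.card {τ : Fin d → Equiv.Perm (Fin n) //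
      (∀ m, (τ m).IsSwap) ∧ signature τ = lam.parts ∧
      (List.ofFn τ).reverse.prod * h = g}
      = Nat.card {τ : Fin d → Equiv.Perm (Fin n) //
      (∀ m, (τ m).IsSwap) ∧ (fun _ : Fin d → ℕ => True) (fun m => bval (τ m)) ∧
      signature τ = lam.parts ∧ (List.ofFn τ).reverse.prod = c} := by
    refine Nat.card_congr (Equiv.subtypeEquivRight fun τ => ?_)
    rw [hprod_iff τ]
    tauto
  have emono : Nat.card {τ : Fin d → Equiv.Perm (Fin n) //
      (∀ m, (τ m).IsSwap) ∧ Monotone (fun m => bval (τ m)) ∧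
      signature τ = lam.parts ∧ (List.ofFn τ).reverse.prod * h = g}
      = Nat.card {τ : Fin d → Equiv.Perm (Fin n) //
      (∀ m, (τ m).IsSwap) ∧ (Monotone : (Fin d → ℕ) → Prop) (fun m => bval (τ m)) ∧
      signature τ = lam.parts ∧ (List.ofFn τ).reverse.prod = c} := by
    refine Nat.card_congr (Equiv.subtypeEquivRight fun τ => ?_)
    rw [hprod_iff τ]
  rw [etot, emono, card_decomp c lam.parts (fun _ => True),
    card_decomp c lam.parts (Monotone : (Fin d → ℕ) → Prop)]
  have hkey := main_count (n := n) (d := d) c lam.parts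
  have hP0 : ((lam.parts.map Nat.factorial).prod : ℚ) ≠ 0 := by
    have : 0 < (lam.parts.map Nat.factorial).prod :=
      Multiset.prod_pos fun x hx => by
        obtain ⟨y, -, rfl⟩ := Multiset.mem_map.mp hx
        exact Nat.factorial_pos y
    exact_mod_cast this.ne'
  rw [div_mul_eq_mul_div, eq_div_iff hP0]
  push_cast
  have := congrArg (fun x : ℕ => (x : ℚ)) hkey
  push_cast at this
  linarith [this]
end
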